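/- Let e, r : ℝ → ℝ be differentiable, β > 0, z₂(t) = (e(t), r(t)) ∈ ℝ², and let J be a constant with c_j ≤ J ≤ c_J (0 < c_j ≤ c_J). Suppose B : ℝ → ℝ satisfies B̲ₙ ≤ B(t) ≤ B̄ₙ with B̲ₙ > 0, χ : ℝ → ℝ satisfies |χ(t)| ≤ c₁ + c₂‖z₂(t)‖ with c₁, c₂ ≥ 0, and the closed-loop equations e'(t) = r(t) − β e(t) and J r'(t) = χ(t) − e(t) − B(t)(k₂ r(t) + (k₃ + k₄‖z₂(t)‖) sign(r(t))) hold with gains k₂ > 0, k₃ ≥ c₁/B̲ₙ, k₄ ≥ c₂/B̲ₙ. Then the Lyapunov function V_ϱ(t) = ½e(t)² + ½J r(t)² satisfies V_ϱ(t) ≤ V_ϱ(t₀) e^{−λ_ϱ (t − t₀)} for all t ≥ t₀, where λ_ϱ = min(β, B̲ₙ k₂)/b_ϱ and b_ϱ = max(1/2, c_J/2). -/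

import Mathlib

/-- The stacked vector `z₂ = (e, r) ∈ ℝ²` with `‖z₂‖² = e² + r²`. -/
noncomputable def stack2 (x y : ℝ) : WithLp 2 (ℝ × ℝ) :=
  (WithLp.equiv 2 _).symm (x, y)

/-- the motor-layer Lyapunov function `V_ϱ = ½e² + ½Jr²` decays
exponentially: `V_ϱ(t) ≤ V_ϱ(t₀) e^{−lam_ϱ(t − t₀)}` for all `t ≥ t₀`. -/
theorem stmt11
    (e r ed rd : ℝ → ℝ)
    (he : ∀ t, HasDerivAt e (ed t) t) (hr : ∀ t, HasDerivAt r (rd t) t)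
    (β : ℝ) (hβ : 0 < β)
    (z₂ : ℝ → WithLp 2 (ℝ × ℝ)) (hz₂ : z₂ = fun t => stack2 (e t) (r t))
    (J c_j c_J : ℝ) (hc_j : 0 < c_j) (hc_jJ : c_j ≤ c_J)
    (hJlow : c_j ≤ J) (hJhigh : J ≤ c_J)
    (B : ℝ → ℝ) (Blo Bhi : ℝ) (hBlo : 0 < Blo)
    (hB : ∀ t, Blo ≤ B t ∧ B t ≤ Bhi)
    (χ : ℝ → ℝ) (c₁ c₂ : ℝ) (hc₁ : 0 ≤ c₁) (hc₂ : 0 ≤ c₂)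
    (hχ : ∀ t, |χ t| ≤ c₁ + c₂ * ‖z₂ t‖)
    (k₂ k₃ k₄ : ℝ) (hk₂ : 0 < k₂) (hk₃ : c₁ / Blo ≤ k₃) (hk₄ : c₂ / Blo ≤ k₄)
    (hloop₁ : ∀ t, ed t = r t - β * e t)
    (hloop₂ : ∀ t, J * rd t
      = χ t - e t - B t * (k₂ * r t + (k₃ + k₄ * ‖z₂ t‖) * Real.sign (r t)))
    (V : ℝ → ℝ) (hV : V = fun t => (1 / 2) * e t ^ 2 + (1 / 2) * J * r t ^ 2)
    (b_ϱ lam_ϱ : ℝ) (hb : b_ϱ = max (1 / 2) (c_J / 2)) (hlam : lam_ϱ = min β (Blo * k₂) / b_ϱ) :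
    ∀ t₀ t : ℝ, t₀ ≤ t → V t ≤ V t₀ * Real.exp (-lam_ϱ * (t - t₀)) := by
  intro t₀ t ht
  have hb2 : (1/2:ℝ) ≤ b_ϱ := hb ▸ le_max_left _ _
  have hb0 : (0:ℝ) < b_ϱ := lt_of_lt_of_le (by norm_num) hb2
  have hbc : c_J / 2 ≤ b_ϱ := hb ▸ le_max_right _ _
  have hmin : 0 < min β (Blo * k₂) := lt_min hβ (mul_pos hBlo hk₂)
  have hl0 : 0 ≤ lam_ϱ := hlam ▸ div_nonneg hmin.le hb0.le
  have hlb : lam_ϱ * b_ϱ = min β (Blo * k₂) := by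
    rw [hlam]; field_simp
  have hlbeta : lam_ϱ * (1/2) ≤ β :=
    le_trans (mul_le_mul_of_nonneg_left hb2 hl0) (hlb ▸ min_le_left _ _)
  have hlc : lam_ϱ * (c_J/2) ≤ Blo * k₂ :=
    le_trans (mul_le_mul_of_nonneg_left hbc hl0) (hlb ▸ min_le_right _ _)
  have hk₃' : c₁ ≤ Blo * k₃ := by
    rw [div_le_iff₀ hBlo] at hk₃; linarith [hk₃]
  have hk₄' : c₂ ≤ Blo * k₄ := by
    rw [div_le_iff₀ hBlo] at hk₄; linarith [hk₄]
  have hk₃0 : 0 ≤ k₃ := le_trans (div_nonneg hc₁ hBlo.le) hk₃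
  have hk₄0 : 0 ≤ k₄ := le_trans (div_nonneg hc₂ hBlo.le) hk₄
  set Vd : ℝ → ℝ := fun s => e s * ed s + J * (r s * rd s) with hVdd
  have hVd : ∀ s, HasDerivAt V (Vd s) s := by
    intro s
    rw [hV]
    have h1 := (((he s).pow 2).const_mul (1/2:ℝ)).add (((hr s).pow 2).const_mul ((1/2)*J))
    refine h1.congr_deriv ?_
    simp [Vd]; ring
  have key : ∀ s, Vd s + lam_ϱ * V s ≤ 0 := by
    intro s
    have hZ : 0 ≤ ‖z₂ s‖ := norm_nonneg _
    set Z := ‖z₂ s‖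
    set E := e s
    set R := r s
    have hRsign : R * Real.sign R = |R| := by
      rcases lt_trichotomy R 0 with h | h | h
      · rw [Real.sign_of_neg h, abs_of_neg h]; ring
      · simp [h]
      · rw [Real.sign_of_pos h, abs_of_pos h]; ring
    have hχ' : R * χ s ≤ |R| * (c₁ + c₂ * Z) := by
      calc R * χ s ≤ |R * χ s| := le_abs_self _
        _ = |R| * |χ s| := abs_mul _ _
        _ ≤ |R| * (c₁ + c₂ * Z) :=
          mul_le_mul_of_nonneg_left (hχ s) (abs_nonneg _)
    have hBs := hB s
    have hJr := hloop₂ s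
    have heq : Vd s = -β * E^2 + R * χ s - B s * k₂ * R^2
        - B s * (k₃ + k₄ * Z) * |R| := by
      have : J * (R * rd s) = R * (J * rd s) := by ring
      rw [hVdd]
      simp only
      rw [hloop₁ s, this, hJr]
      rw [← hRsign]
      ring
    have hBpos : 0 < B s := lt_of_lt_of_le hBlo hBs.1
    have hfric : Blo * (k₃ + k₄ * Z) * |R| ≤ B s * (k₃ + k₄ * Z) * |R| := by
      apply mul_le_mul_of_nonneg_right _ (abs_nonneg _)
      apply mul_le_mul_of_nonneg_right hBs.1
      positivity
    have hfric2 : (c₁ + c₂ * Z) * |R| ≤ Blo * (k₃ + k₄ * Z) * |R| := by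
      apply mul_le_mul_of_nonneg_right _ (abs_nonneg _)
      nlinarith
    have hk2 : Blo * k₂ * R^2 ≤ B s * k₂ * R^2 := by
      apply mul_le_mul_of_nonneg_right _ (sq_nonneg _)
      exact mul_le_mul_of_nonneg_right hBs.1 hk₂.le
    have hVs : V s = (1/2) * E^2 + (1/2) * J * R^2 := by rw [hV]
    rw [heq, hVs]
    have f1 := mul_le_mul_of_nonneg_right hlbeta (sq_nonneg E)
    have f2 := mul_le_mul_of_nonneg_right hlc (sq_nonneg R)
    have f3 := mul_le_mul_of_nonneg_right hJhigh (mul_nonneg hl0 (sq_nonneg R))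
    linarith [hχ', hfric, hfric2, hk2]
  set g : ℝ → ℝ := fun s => V s * Real.exp (lam_ϱ * (s - t₀)) with hg
  have hgd : ∀ s, HasDerivAt g ((Vd s + lam_ϱ * V s) * Real.exp (lam_ϱ * (s - t₀))) s := by
    intro s
    have hexp : HasDerivAt (fun s => Real.exp (lam_ϱ * (s - t₀)))
        (Real.exp (lam_ϱ * (s - t₀)) * lam_ϱ) s := by
      have : HasDerivAt (fun s => lam_ϱ * (s - t₀)) lam_ϱ s := by
        simpa using ((hasDerivAt_id s).sub_const t₀).const_mul lam_ϱ
      simpa [mul_comm] using this.exp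
    have := (hVd s).mul hexp
    refine this.congr_deriv ?_
    ring
  have hanti : Antitone g := by
    apply antitone_of_deriv_nonpos
    · exact fun s => (hgd s).differentiableAt
    · intro s
      rw [(hgd s).deriv]
      exact mul_nonpos_of_nonpos_of_nonneg (key s) (Real.exp_pos _).le
  have hgle : g t ≤ g t₀ := hanti ht
  have hgt₀ : g t₀ = V t₀ := by simp [hg]
  rw [neg_mul, Real.exp_neg, ← div_eq_mul_inv, le_div_iff₀ (Real.exp_pos _)]
  rw [hgt₀] at hgle
  exact hgle
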